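/- Soundness of C₁ᴰ with respect to swap Kripke models: for every set of formulas Γ ∪ {φ} ⊆ For(Σ₁ᴰ), if Γ ⊢_{C₁ᴰ} φ then Γ ⊨_{C₁ᴰ} φ. -/

import Mathlib

/-- Formulas over the signature Σ₁ᴰ = {∧, ∨, →, ¬, O}, with countably many
propositional variables. -/
inductive Form : Type
  | var : ℕ → Form
  | and : Form → Form → Form
  | or : Form → Form → Form
  | imp : Form → Form → Form
  | neg : Form → Form
  | obl : Form → Form

namespace Form
/-- α° := ¬(α ∧ ¬α) -/
def cons (α : Form) : Form := (α.and α.neg).neg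
/-- ⊥_α := (α ∧ ¬α) ∧ α° -/
def bot (α : Form) : Form := (α.and α.neg).and α.cons
end Form

/-- Theorems of C₁ᴰ: CPL⁺ axioms, (EM), (cf), (bc)', (ca_#)' for # ∈ {∧,∨,→},
(ca_O)', (O-K), (O-E), with rules Modus Ponens and O-necessitation. -/
inductive ThmC1D : Form → Prop
  | A1 (α β : Form) : ThmC1D (α.imp (β.imp α))
  | A2 (α β γ : Form) : ThmC1D ((α.imp (β.imp γ)).imp ((α.imp β).imp (α.imp γ)))
  | A3 (α β : Form) : ThmC1D (α.imp (β.imp (α.and β)))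
  | A4 (α β : Form) : ThmC1D ((α.and β).imp α)
  | A5 (α β : Form) : ThmC1D ((α.and β).imp β)
  | A6 (α β : Form) : ThmC1D (α.imp (α.or β))
  | A7 (α β : Form) : ThmC1D (β.imp (α.or β))
  | A8 (α β γ : Form) : ThmC1D ((α.imp γ).imp ((β.imp γ).imp ((α.or β).imp γ)))
  | A9 (α β : Form) : ThmC1D (((α.imp β).imp α).imp α)
  | EM (α : Form) : ThmC1D (α.or α.neg)
  | cf (α : Form) : ThmC1D (α.neg.neg.imp α)
  | bc' (α β : Form) : ThmC1D (α.cons.imp (α.imp (α.neg.imp β)))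
  | caAnd' (α β : Form) : ThmC1D ((α.cons.and β.cons).imp (α.and β).cons)
  | caOr' (α β : Form) : ThmC1D ((α.cons.and β.cons).imp (α.or β).cons)
  | caImp' (α β : Form) : ThmC1D ((α.cons.and β.cons).imp (α.imp β).cons)
  | caO' (α : Form) : ThmC1D (α.cons.imp α.obl.cons)
  | OK (α β : Form) : ThmC1D ((α.imp β).obl.imp (α.obl.imp β.obl))
  | OE (α : Form) : ThmC1D (α.bot.obl.imp α.bot)
  | mp {α β : Form} : ThmC1D (α.imp β) → ThmC1D α → ThmC1D β
  | nec {α : Form} : ThmC1D α → ThmC1D α.obl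

/-- conj γ [γ₂,…,γ_k] = γ ∧ γ₂ ∧ … ∧ γ_k -/
def conj (γ : Form) : List Form → Form
  | [] => γ
  | δ :: l => γ.and (conj δ l)

/-- Γ ⊢_{C₁ᴰ} φ iff ⊢ φ or ⊢ (γ₁ ∧ … ∧ γ_k) → φ for some γ₁,…,γ_k ∈ Γ, k ≥ 1. -/
def DerivC1D (Γ : Set Form) (φ : Form) : Prop :=
  ThmC1D φ ∨ ∃ (γ : Form) (l : List Form),
    (∀ δ ∈ γ :: l, δ ∈ Γ) ∧ ThmC1D ((conj γ l).imp φ)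

/-- The three snapshots T = (1,0), t = (1,1), F = (0,1). -/
inductive SV : Type
  | T | t | F
deriving DecidableEq

/-- First coordinate of a snapshot. -/
def SV.p1 : SV → Bool
  | .T => true | .t => true | .F => false

/-- Second coordinate of a snapshot. -/
def SV.p2 : SV → Bool
  | .T => false | .t => true | .F => true

/-- Designated values: D = {T, t}, i.e. first coordinate is 1. -/
def SV.desig (a : SV) : Prop := a.p1 = true

/-- The Boolean (classical) snapshots {T, F}. -/
def SV.boo (a : SV) : Prop := a = SV.T ∨ a = SV.F

/-- Swap Kripke model conditions for C₁ᴰ on a serial frame (W,R):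
¬ is interpreted by ¬̃₁, O by Õ, and the valuations satisfy the DCila
restrictions together with: v_w(α) ∈ {T,F} implies v_w(Oα) ∈ {T,F}. -/
structure IsModelC1D {W : Type} (R : W → W → Prop) (v : W → Form → SV) : Prop where
  serial : ∀ w, ∃ w', R w w'
  and_ : ∀ w α β, (v w (α.and β)).p1 = ((v w α).p1 && (v w β).p1)
  or_ : ∀ w α β, (v w (α.or β)).p1 = ((v w α).p1 || (v w β).p1)
  imp_ : ∀ w α β, (v w (α.imp β)).p1 = (!(v w α).p1 || (v w β).p1)
  neg_ : ∀ w α, (v w α.neg).p1 = (v w α).p2 ∧ (v w α.neg).p2 ≤ (v w α).p1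
  obl_ : ∀ w α, ((v w α.obl).p1 = true ↔ ∀ w', R w w' → (v w' α).p1 = true)
  cl_ : ∀ w α, v w α = SV.t → v w (α.and α.neg) = SV.T
  booAnd : ∀ w α β, (v w α).boo → (v w β).boo → (v w (α.and β)).boo
  booOr : ∀ w α β, (v w α).boo → (v w β).boo → (v w (α.or β)).boo
  booImp : ∀ w α β, (v w α).boo → (v w β).boo → (v w (α.imp β)).boo
  booObl : ∀ w α, (v w α).boo → (v w α.obl).boo

/-- Γ ⊨_{C₁ᴰ} φ : semantic consequence over all swap Kripke models for C₁ᴰ. -/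
def SemC1D (Γ : Set Form) (φ : Form) : Prop :=
  ∀ (W : Type) (R : W → W → Prop) (v : W → Form → SV), Nonempty W →
    IsModelC1D R v → ∀ w : W, (∀ γ ∈ Γ, (v w γ).desig) → (v w φ).desig

lemma SV.p1_or_p2 (a : SV) : (a.p1 || a.p2) = true := by cases a <;> rfl

lemma SV.eq_F (a : SV) (h : a.p1 = false) : a = SV.F := by cases a <;> simp_all [SV.p1]

lemma SV.eq_t (a : SV) (h1 : a.p1 = true) (h2 : a.p2 = true) : a = SV.t := by
  cases a <;> simp_all [SV.p1, SV.p2]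

lemma SV.boo_p2 (a : SV) (h : a.boo) : a.p2 = !a.p1 := by
  rcases h with h | h <;> subst h <;> rfl

lemma SV.not_boo (a : SV) (h : ¬ a.boo) : a = SV.t := by
  cases a <;> simp_all [SV.boo]

section Valid

variable {W : Type} {R : W → W → Prop} {v : W → Form → SV}
variable (hm : IsModelC1D R v)

include hm

lemma boo_of_cons {w : W} {α : Form} (h : (v w α.cons).p1 = true) : (v w α).boo := by
  by_contra hb
  have ht := SV.not_boo _ hb
  have hT := hm.cl_ w α ht
  have h1 := (hm.neg_ w (α.and α.neg)).1
  rw [hT] at h1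
  simp [Form.cons] at h
  rw [h] at h1
  exact absurd h1.symm (by decide)

lemma cons_of_boo {w : W} {α : Form} (h : (v w α).boo) : (v w α.cons).p1 = true := by
  have hneg : (v w α.neg).boo := by
    rcases h with h | h
    · -- α = T : p1(¬α) = p2(α) = false
      have h1 := (hm.neg_ w α).1
      rw [h] at h1
      right; exact SV.eq_F _ (by simpa [SV.p2] using h1)
    · -- α = F : p1(¬α) = true, p2(¬α) ≤ false
      have h1 := (hm.neg_ w α).1
      have h2 := (hm.neg_ w α).2
      rw [h] at h1 h2
      left
      cases hv : v w α.neg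
      · rfl
      · rw [hv] at h2; exact absurd h2 (by decide)
      · rw [hv] at h1; exact absurd h1 (by decide)
  have hab : (v w (α.and α.neg)).boo := hm.booAnd w α α.neg h hneg
  have hp1 : (v w (α.and α.neg)).p1 = false := by
    rw [hm.and_]
    rcases h with h | h
    · have h1 := (hm.neg_ w α).1
      rw [h] at h1
      simp only [SV.p2] at h1
      rw [h, h1]; rfl
    · rw [h]; rfl
  have hF : v w (α.and α.neg) = SV.F := SV.eq_F _ hp1
  have := (hm.neg_ w (α.and α.neg)).1
  rw [hF] at this
  simpa [Form.cons, SV.p2] using this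

lemma bot_p1_false (w : W) (α : Form) : (v w α.bot).p1 = false := by
  by_contra hb
  have h : (v w α.bot).p1 = true := by
    cases hh : (v w α.bot).p1
    · exact absurd hh hb
    · rfl
  rw [Form.bot, hm.and_, hm.and_] at h
  simp only [Bool.and_eq_true] at h
  obtain ⟨⟨h1, h2⟩, h3⟩ := h
  have hn := (hm.neg_ w α).1
  have ht : v w α = SV.t := SV.eq_t _ h1 (hn ▸ h2)
  have hT := hm.cl_ w α ht
  have hc := (hm.neg_ w (α.and α.neg)).1
  rw [hT] at hc
  rw [Form.cons] at h3
  rw [h3] at hc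
  exact absurd hc.symm (by decide)

lemma thm_valid {α : Form} (hα : ThmC1D α) : ∀ w, (v w α).p1 = true := by
  induction hα with
  | A1 α β => intro w; simp only [hm.imp_]
              cases (v w α).p1 <;> cases (v w β).p1 <;> rfl
  | A2 α β γ => intro w; simp only [hm.imp_]
                cases (v w α).p1 <;> cases (v w β).p1 <;> cases (v w γ).p1 <;> rfl
  | A3 α β => intro w; simp only [hm.imp_, hm.and_]
              cases (v w α).p1 <;> cases (v w β).p1 <;> rfl
  | A4 α β => intro w; simp only [hm.imp_, hm.and_]
              cases (v w α).p1 <;> cases (v w β).p1 <;> rfl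
  | A5 α β => intro w; simp only [hm.imp_, hm.and_]
              cases (v w α).p1 <;> cases (v w β).p1 <;> rfl
  | A6 α β => intro w; simp only [hm.imp_, hm.or_]
              cases (v w α).p1 <;> cases (v w β).p1 <;> rfl
  | A7 α β => intro w; simp only [hm.imp_, hm.or_]
              cases (v w α).p1 <;> cases (v w β).p1 <;> rfl
  | A8 α β γ => intro w; simp only [hm.imp_, hm.or_]
                cases (v w α).p1 <;> cases (v w β).p1 <;> cases (v w γ).p1 <;> rfl
  | A9 α β => intro w; simp only [hm.imp_]
              cases (v w α).p1 <;> cases (v w β).p1 <;> rfl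
  | EM α => intro w
            have h1 := (hm.neg_ w α).1
            rw [hm.or_, h1]
            exact SV.p1_or_p2 _
  | cf α => intro w
            rw [hm.imp_]
            have h1 := (hm.neg_ w α.neg).1
            have h2 := (hm.neg_ w α).2
            rw [h1]
            cases hp : (v w α.neg).p2
            · rfl
            · rw [hp] at h2
              cases hq : (v w α).p1
              · rw [hq] at h2; exact absurd h2 (by decide)
              · rfl
  | bc' α β => intro w
               simp only [hm.imp_]
               cases hc : (v w α.cons).p1
               · rfl
               · rcases boo_of_cons hm hc with h | h <;>
                   [skip; (rw [hm.neg_ w α |>.1, h]; rfl)]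
                 have h1 := (hm.neg_ w α).1
                 rw [h1, h]
                 rfl
  | caAnd' α β => intro w
                  rw [hm.imp_, hm.and_]
                  cases hc : ((v w α.cons).p1 && (v w β.cons).p1)
                  · rfl
                  · simp only [Bool.and_eq_true] at hc
                    have hb := hm.booAnd w α β (boo_of_cons hm hc.1) (boo_of_cons hm hc.2)
                    simp [cons_of_boo hm hb]
  | caOr' α β => intro w
                 rw [hm.imp_, hm.and_]
                 cases hc : ((v w α.cons).p1 && (v w β.cons).p1)
                 · rfl
                 · simp only [Bool.and_eq_true] at hc
                   have hb := hm.booOr w α β (boo_of_cons hm hc.1) (boo_of_cons hm hc.2)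
                   simp [cons_of_boo hm hb]
  | caImp' α β => intro w
                  rw [hm.imp_, hm.and_]
                  cases hc : ((v w α.cons).p1 && (v w β.cons).p1)
                  · rfl
                  · simp only [Bool.and_eq_true] at hc
                    have hb := hm.booImp w α β (boo_of_cons hm hc.1) (boo_of_cons hm hc.2)
                    simp [cons_of_boo hm hb]
  | caO' α => intro w
              rw [hm.imp_]
              cases hc : (v w α.cons).p1
              · rfl
              · have hb := hm.booObl w α (boo_of_cons hm hc)
                simp [cons_of_boo hm hb]
  | OK α β => intro w
              simp only [hm.imp_]
              cases h1 : (v w (α.imp β).obl).p1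
              · rfl
              · cases h2 : (v w α.obl).p1
                · rfl
                · have hb : (v w β.obl).p1 = true := by
                    rw [hm.obl_]
                    intro w' hw
                    have ha := (hm.obl_ w α).1 h2 w' hw
                    have hab := (hm.obl_ w (α.imp β)).1 h1 w' hw
                    rw [hm.imp_, ha] at hab
                    simpa using hab
                  simp [hb]
  | OE α => intro w
            rw [hm.imp_]
            cases h1 : (v w α.bot.obl).p1
            · rfl
            · obtain ⟨w', hw⟩ := hm.serial w
              have := (hm.obl_ w α.bot).1 h1 w' hw
              rw [bot_p1_false hm w' α] at this
              exact absurd this (by decide)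
  | mp hab ha iha ihb => intro w
                         have h := iha w
                         rw [hm.imp_, ihb w] at h
                         simpa using h
  | nec ha ih => intro w
                 rw [hm.obl_]
                 intro w' _
                 exact ih w'

lemma conj_p1 {w : W} (γ : Form) (l : List Form)
    (h : ∀ δ ∈ γ :: l, (v w δ).p1 = true) : (v w (conj γ l)).p1 = true := by
  induction l generalizing γ with
  | nil => exact h γ (by simp)
  | cons δ l ih =>
      show (v w (γ.and (conj δ l))).p1 = true
      rw [hm.and_, h γ (by simp), ih δ (by intro x hx; exact h x (by
        simp at hx ⊢; tauto))]
      rfl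

end Valid

/-- Soundness of C₁ᴰ w.r.t. swap Kripke models. -/
theorem C1D_soundness (Γ : Set Form) (φ : Form) :
    DerivC1D Γ φ → SemC1D Γ φ := by
  rintro (h | ⟨γ, l, hmem, hthm⟩)
  · intro W R v _ hmod w _
    exact thm_valid hmod h w
  · intro W R v _ hmod w hΓ
    have hc : (v w (conj γ l)).p1 = true :=
      conj_p1 hmod γ l (fun δ hδ => hΓ δ (hmem δ hδ))
    have h := thm_valid hmod hthm w
    rw [hmod.imp_, hc] at h
    simpa [SV.desig] using h
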